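/- Let (K, D) be a differential field of characteristic zero, let t be transcendental over K, and extend D to the polynomial ring K[t] by D(t) = a·t for some a ∈ K (t is a hyperexponential monomial). Assume that for every nonzero integer n there is no nonzero u ∈ K with D(u) = n·a·u. Then a monic polynomial p ∈ K[t] divides Dp if and only if p = t^k for some k ∈ ℕ; in other words, the monic special polynomials are exactly the powers of t. -/

import Mathlib

open Polynomial

/-- Let `(K, d)` be a differential field of characteristic zero, `t` transcendental
over `K` (so `K[t]` is modeled by `Polynomial K` with `t = X`), and extend `d` to a
derivation `D` on `K[t]` with `D t = a·t` for some `a ∈ K` (`t` is a hyperexponential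
monomial). Assume for every nonzero integer `n` there is no nonzero `u ∈ K` with
`d u = n·a·u`. Then a monic `p ∈ K[t]` divides `Dp` if and only if `p = t^k` for some
`k ∈ ℕ`: the monic special polynomials are exactly the powers of `t`. -/
theorem hyperexponential_special_iff_power
    {K : Type} [Field K] [CharZero K]
    (d : K → K)
    (hdadd : ∀ x y : K, d (x + y) = d x + d y)
    (hdmul : ∀ x y : K, d (x * y) = x * d y + y * d x)
    (D : Polynomial K → Polynomial K)
    (hDadd : ∀ p q : Polynomial K, D (p + q) = D p + D q)
    (hDmul : ∀ p q : Polynomial K, D (p * q) = p * D q + q * D p)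
    (hDC : ∀ c : K, D (C c) = C (d c))
    (a : K) (hDX : D X = C a * X)
    (hnosol : ∀ n : ℤ, n ≠ 0 → ∀ u : K, u ≠ 0 → d u ≠ (n : K) * a * u)
    (p : Polynomial K) (hp : p.Monic) :
    p ∣ D p ↔ ∃ k : ℕ, p = X ^ k := by
  have hd0 : d 0 = 0 := by have := hdadd 0 0; simpa using this
  have hd1 : d 1 = 0 := by have := hdmul 1 1; simpa using this
  have hD0 : D 0 = 0 := by have := hDadd 0 0; simpa using this
  have hDXpow : ∀ k : ℕ, D (X ^ k) = C ((k : K) * a) * X ^ k := by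
    intro k
    induction k with
    | zero =>
      have h := hDC 1
      rw [map_one] at h
      simp [h, hd1]
    | succ k ih =>
      rw [pow_succ, hDmul, ih, hDX]
      push_cast
      rw [show ((k : K) + 1) * a = (k : K) * a + a by ring, map_add]
      ring
  constructor
  · intro hdvd
    set n := p.natDegree with hn
    have hDmono : ∀ (i : ℕ) (c : K),
        D (monomial i c) = monomial i (d c + (i : K) * a * c) := by
      intro i c
      rw [← C_mul_X_pow_eq_monomial, ← C_mul_X_pow_eq_monomial, hDmul, hDXpow, hDC]
      simp only [map_add, map_mul]
      ring
    have hDsum : ∀ (s : Finset ℕ) (f : ℕ → Polynomial K),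
        D (∑ i ∈ s, f i) = ∑ i ∈ s, D (f i) := by
      intro s f
      induction s using Finset.induction with
      | empty => simpa using hD0
      | insert _ _ h ih => rw [Finset.sum_insert h, Finset.sum_insert h, hDadd, ih]
    have hps : p = ∑ i ∈ Finset.range (n + 1), monomial i (p.coeff i) :=
      p.as_sum_range' (n + 1) (lt_add_one _)
    have hDp : D p = ∑ i ∈ Finset.range (n + 1),
        monomial i (d (p.coeff i) + (i : K) * a * p.coeff i) := by
      conv_lhs => rw [hps]
      rw [hDsum]
      exact Finset.sum_congr rfl fun i _ => hDmono i _
    have hcoeff : ∀ j : ℕ, (D p).coeff j = d (p.coeff j) + (j : K) * a * p.coeff j := by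
      intro j
      rw [hDp, finset_sum_coeff]
      simp only [coeff_monomial]
      rw [Finset.sum_ite_eq' (Finset.range (n + 1)) j]
      by_cases hj : j < n + 1
      · simp [hj]
      · have h1 : p.coeff j = 0 := coeff_eq_zero_of_natDegree_lt (by omega)
        simp [hj, h1, hd0]
    have hdegD : (D p).natDegree ≤ n := by
      rw [hDp]
      refine le_trans (natDegree_sum_le _ _) ?_
      simp only [Finset.fold_max_le]
      refine ⟨Nat.zero_le _, ?_⟩
      intro i hi
      exact le_trans (natDegree_monomial_le _) (by simp at hi; omega)
    obtain ⟨q, hq⟩ := hdvd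
    -- get D p = C lam * p
    obtain ⟨lam, hlam⟩ : ∃ lam : K, D p = C lam * p := by
      by_cases hq0 : q = 0
      · exact ⟨0, by simp [hq, hq0]⟩
      · have hdeg : n + q.natDegree ≤ n := by
          rw [← natDegree_mul hp.ne_zero hq0, ← hq]; exact hdegD
        have hq1 : q.natDegree = 0 := by omega
        refine ⟨q.coeff 0, ?_⟩
        rw [hq]
        conv_lhs => rw [eq_C_of_natDegree_eq_zero hq1]
        ring
    have heq : ∀ j : ℕ, d (p.coeff j) + (j : K) * a * p.coeff j = lam * p.coeff j := by
      intro j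
      rw [← hcoeff j, hlam, coeff_C_mul]
    have hlamval : lam = (n : K) * a := by
      have := heq n
      rw [hp.coeff_natDegree, hd1] at this
      simp at this
      exact this.symm
    have hcz : ∀ j : ℕ, j ≠ n → p.coeff j = 0 := by
      intro j hj
      by_contra hc
      have h2 : d (p.coeff j) = (((n : ℤ) - j : ℤ) : K) * a * p.coeff j := by
        have := heq j
        rw [hlamval] at this
        push_cast
        linear_combination this
      exact hnosol ((n : ℤ) - j) (by omega) (p.coeff j) hc h2
    refine ⟨n, ?_⟩
    ext j
    rw [coeff_X_pow]
    by_cases hj : j = n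
    · subst hj; simp [hn, hp.coeff_natDegree]
    · simp [hj, hcz j hj]
  · rintro ⟨k, rfl⟩
    rw [hDXpow]
    exact Dvd.intro_left _ rfl
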